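/- For any C*-algebra B, regard B ⊗ 𝒦 as a 𝒦-algebra via the nondegenerate homomorphism 1 ⊗ id: k ↦ 1_B ⊗ k from 𝒦 to M(B ⊗ 𝒦). Then the map b ↦ b ⊗ 1_𝒦 gives a C*-isomorphism of B onto the relative commutant C(B ⊗ 𝒦, 1 ⊗ id); in particular C(B ⊗ 𝒦, 1 ⊗ id) = B ⊗ 1_𝒦 inside M(B ⊗ 𝒦). -/

import Mathlib

open scoped MultiplierAlgebra

noncomputable section

/-! ## Framework

`𝓜(ℂ, A)` is the multiplier algebra `M(A)` of a (non-unital) C⋆-algebra `A`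
(Mathlib's `DoubleCentralizer`), and `(a : 𝓜(ℂ, A))` is the canonical image of `a : A`
in it. -/

/-- A system of matrix units `{u i j}` (indexed by `ℕ`) in a non-unital C⋆-algebra `K`,
whose linear span is dense.  A C⋆-algebra carrying such a system is precisely (i.e., is
⋆-isomorphic to) the C⋆-algebra `𝒦` of compact operators on a separable
infinite-dimensional Hilbert space. -/
structure MatrixUnits (K : Type*) [NonUnitalCStarAlgebra K] where
  u : ℕ → ℕ → K
  u_ne_zero : ∀ i j, u i j ≠ 0
  u_mul : ∀ i j k l, u i j * u k l = if j = k then u i l else 0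
  star_u : ∀ i j, star (u i j) = u j i
  dense_span : Dense (Submodule.span ℂ (Set.range fun p : ℕ × ℕ => u p.1 p.2) : Set K)

/-- `K` is (a copy of) the C⋆-algebra `𝒦` of compact operators on a separable
infinite-dimensional Hilbert space. -/
def IsCompactOperatorsAlgebra (K : Type*) [NonUnitalCStarAlgebra K] : Prop :=
  Nonempty (MatrixUnits K)

/-- A homomorphism `φ : A → M(B)` is *nondegenerate* if `φ(A)·B` is dense in `B`. -/
def Nondegenerate {A B : Type*} [NonUnitalCStarAlgebra A] [NonUnitalCStarAlgebra B]
    (φ : A →⋆ₙₐ[ℂ] 𝓜(ℂ, B)) : Prop :=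
  ∀ b : B, (b : 𝓜(ℂ, B)) ∈
    closure (Submodule.span ℂ {x : 𝓜(ℂ, B) | ∃ (a : A) (c : B), x = φ a * c} : Set 𝓜(ℂ, B))

/-- The `A`-relative commutant `C(A, ι) = {a ∈ M(A) : ι(k)·a = a·ι(k) ∈ A for all k ∈ K}`
of a `K`-algebra `(A, ι)`. -/
def relComm {K A : Type*} [NonUnitalCStarAlgebra K] [NonUnitalCStarAlgebra A]
    (ι : K →⋆ₙₐ[ℂ] 𝓜(ℂ, A)) : Set 𝓜(ℂ, A) :=
  {a | ∀ k : K, ι k * a = a * ι k ∧ a * ι k ∈ Set.range ((↑) : A → 𝓜(ℂ, A))}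

/-- A witness that `T` is (a copy of) the spatial tensor product `B ⊗ K`: a bilinear,
multiplicative, star-preserving map on elementary tensors whose range has dense linear span
and which satisfies `‖b ⊗ k‖ = ‖b‖‖k‖`.  (Since the compact operators `𝒦` are nuclear and
simple, for `K = 𝒦` such data identifies `T` with the minimal tensor product `B ⊗ 𝒦`.) -/
structure CStarTensor (B K T : Type*) [NonUnitalCStarAlgebra B] [NonUnitalCStarAlgebra K]
    [NonUnitalCStarAlgebra T] where
  tmul : B → K → T
  add_tmul : ∀ b b' k, tmul (b + b') k = tmul b k + tmul b' k
  tmul_add : ∀ b k k', tmul b (k + k') = tmul b k + tmul b k'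
  smul_tmul : ∀ (c : ℂ) b k, tmul (c • b) k = c • tmul b k
  tmul_smul : ∀ (c : ℂ) b k, tmul b (c • k) = c • tmul b k
  tmul_mul_tmul : ∀ b b' k k', tmul b k * tmul b' k' = tmul (b * b') (k * k')
  star_tmul : ∀ b k, star (tmul b k) = tmul (star b) (star k)
  norm_tmul : ∀ b k, ‖tmul b k‖ = ‖b‖ * ‖k‖
  dense_span : Dense (Submodule.span ℂ {x : T | ∃ b k, x = tmul b k} : Set T)

/-- `ι` is the canonical nondegenerate homomorphism `1 ⊗ id : K → M(B ⊗ K)`, characterized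
by `(1 ⊗ k)·(b ⊗ k') = b ⊗ (k·k')` and `(b ⊗ k')·(1 ⊗ k) = b ⊗ (k'·k)`. -/
def IsOneTensorId {B K T : Type*} [NonUnitalCStarAlgebra B] [NonUnitalCStarAlgebra K]
    [NonUnitalCStarAlgebra T] (τ : CStarTensor B K T) (ι : K →⋆ₙₐ[ℂ] 𝓜(ℂ, T)) : Prop :=
  ∀ (k : K) (b : B) (k' : K),
    ι k * (τ.tmul b k' : 𝓜(ℂ, T)) = (τ.tmul b (k * k') : 𝓜(ℂ, T)) ∧
      (τ.tmul b k' : 𝓜(ℂ, T)) * ι k = (τ.tmul b (k' * k) : 𝓜(ℂ, T))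

/-! ### Auxiliary lemmas -/

namespace RelCommAux

open Filter Topology

section Mult

variable {T : Type*} [NonUnitalCStarAlgebra T]

lemma ann_left {c : T} (h : ∀ x : T, x * c = 0) : c = 0 := by
  have := h (star c)
  rw [← norm_eq_zero, ← sq_eq_zero_iff, sq, ← CStarRing.norm_star_mul_self, this, norm_zero]

lemma ann_right {c : T} (h : ∀ x : T, c * x = 0) : c = 0 := by
  have := h (star c)
  rw [← norm_eq_zero, ← sq_eq_zero_iff, sq, ← CStarRing.norm_self_mul_star, this, norm_zero]

lemma fst_mul_right (m : 𝓜(ℂ, T)) (t y : T) : m.fst (t * y) = m.fst t * y := by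
  rw [← sub_eq_zero]
  apply ann_left
  intro x
  rw [mul_sub, ← m.central, ← mul_assoc, m.central, mul_assoc, sub_self]

lemma snd_mul_left (m : 𝓜(ℂ, T)) (x y : T) : m.snd (x * y) = x * m.snd y := by
  rw [← sub_eq_zero]
  apply ann_right
  intro z
  rw [sub_mul, m.central, mul_assoc, ← m.central, ← mul_assoc, sub_self]

lemma mul_coe (m : 𝓜(ℂ, T)) (t : T) : m * (t : 𝓜(ℂ, T)) = ((m.fst t : T) : 𝓜(ℂ, T)) := by
  ext : 1
  refine Prod.ext (ContinuousLinearMap.ext fun y => ?_) (ContinuousLinearMap.ext fun y => ?_)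
  · show m.fst (t * y) = m.fst t * y
    exact fst_mul_right m t y
  · show m.snd y * t = y * m.fst t
    exact m.central y t

lemma coe_mul (m : 𝓜(ℂ, T)) (t : T) : (t : 𝓜(ℂ, T)) * m = ((m.snd t : T) : 𝓜(ℂ, T)) := by
  ext : 1
  refine Prod.ext (ContinuousLinearMap.ext fun y => ?_) (ContinuousLinearMap.ext fun y => ?_)
  · show t * m.fst y = m.snd t * y
    exact (m.central t y).symm
  · show m.snd (y * t) = y * m.snd t
    exact snd_mul_left m y t

lemma coe_inj : Function.Injective ((↑) : T → 𝓜(ℂ, T)) := by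
  intro s t h
  have h0 : ∀ y : T, (s - t) * y = 0 := by
    intro y
    have := congrArg (fun m : 𝓜(ℂ, T) => m.fst y) h
    simp only [DoubleCentralizer.coe_fst, ContinuousLinearMap.mul_apply'] at this
    rw [sub_mul, this, sub_self]
  exact sub_eq_zero.mp (ann_right h0)

lemma ext_fst (m₁ m₂ : 𝓜(ℂ, T)) (h : ∀ t, m₁.fst t = m₂.fst t) : m₁ = m₂ := by
  ext : 1
  refine Prod.ext (ContinuousLinearMap.ext h) (ContinuousLinearMap.ext fun x => ?_)
  rw [← sub_eq_zero]
  apply ann_right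
  intro y
  rw [sub_mul, m₁.central, m₂.central, h, sub_self]

/-- uniformly bounded CLMs eventually constant on a set with dense span are pointwise Cauchy. -/
lemma cauchySeq_of_dense {C : ℝ} (f : ℕ → T →L[ℂ] T) (hf : ∀ n, ‖f n‖ ≤ C)
    {s : Set T} (hs : Dense (Submodule.span ℂ s : Set T))
    (h : ∀ x ∈ s, ∃ N, ∀ m n, N ≤ m → N ≤ n → f m x = f n x) (t : T) :
    CauchySeq fun n => f n t := by
  have hC : 0 ≤ C := le_trans (norm_nonneg _) (hf 0)
  have hspan : ∀ x ∈ Submodule.span ℂ s, ∃ N, ∀ m n, N ≤ m → N ≤ n → f m x = f n x := by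
    intro x hx
    induction hx using Submodule.span_induction with
    | mem x hx => exact h x hx
    | zero => exact ⟨0, fun m n _ _ => by simp⟩
    | add x y _ _ hx hy =>
        obtain ⟨N₁, h₁⟩ := hx
        obtain ⟨N₂, h₂⟩ := hy
        exact ⟨max N₁ N₂, fun m n hm hn => by
          simp only [map_add, h₁ m n (le_trans (le_max_left _ _) hm) (le_trans (le_max_left _ _) hn),
            h₂ m n (le_trans (le_max_right _ _) hm) (le_trans (le_max_right _ _) hn)]⟩
    | smul c x _ hx =>
        obtain ⟨N, hN⟩ := hx
        exact ⟨N, fun m n hm hn => by simp only [map_smul, hN m n hm hn]⟩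
  rw [Metric.cauchySeq_iff]
  intro ε hε
  obtain ⟨y, hy, hyd⟩ := hs.exists_dist_lt t (by positivity : (0:ℝ) < ε / (2 * (C + 1)))
  obtain ⟨N, hN⟩ := hspan y hy
  refine ⟨N, fun m hm n hn => ?_⟩
  have key : ∀ k, N ≤ k → dist (f k t) (f k y) < ε / 2 := by
    intro k _
    rw [dist_eq_norm, ← map_sub]
    calc ‖f k (t - y)‖ ≤ ‖f k‖ * ‖t - y‖ := (f k).le_opNorm _
      _ ≤ C * ‖t - y‖ := by gcongr; exact hf k
      _ < ε / 2 := by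
          rw [dist_eq_norm] at hyd
          calc C * ‖t - y‖ ≤ (C + 1) * ‖t - y‖ := by gcongr; linarith
            _ < (C + 1) * (ε / (2 * (C + 1))) := by
                apply mul_lt_mul_of_pos_left hyd; linarith
            _ = ε / 2 := by field_simp
  calc dist (f m t) (f n t)
      ≤ dist (f m t) (f m y) + dist (f m y) (f n y) + dist (f n y) (f n t) :=
        dist_triangle4 _ _ _ _
    _ < ε / 2 + 0 + ε / 2 := by
        have h0 : dist (f m y) (f n y) = 0 := by rw [hN m n hm hn, dist_self]
        have k1 := key m hm
        have k2 := key n hn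
        rw [dist_comm ((f n) t)] at k2
        linarith
    _ = ε := by ring

/-- left multiplication as a CLM -/
def lmul (a : T) : T →L[ℂ] T := ContinuousLinearMap.mul ℂ T a

@[simp] lemma lmul_apply (a t : T) : lmul a t = a * t := rfl

lemma norm_lmul_le (a : T) : ‖lmul a‖ ≤ ‖a‖ := ContinuousLinearMap.opNorm_mul_apply_le ℂ T a

/-- right multiplication as a CLM -/
def rmul (a : T) : T →L[ℂ] T := (ContinuousLinearMap.mul ℂ T).flip a

@[simp] lemma rmul_apply (a t : T) : rmul a t = t * a := rfl

lemma norm_rmul_le (a : T) : ‖rmul a‖ ≤ ‖a‖ := by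
  apply ContinuousLinearMap.opNorm_le_bound _ (norm_nonneg a)
  intro t
  rw [rmul_apply, mul_comm ‖a‖]
  exact norm_mul_le t a

end Mult

/-! ### Matrix units -/

namespace MU

variable {K : Type*} [NonUnitalCStarAlgebra K] (M : MatrixUnits K)

/-- the canonical approximate unit of projections -/
def e (n : ℕ) : K := ∑ i ∈ Finset.range n, M.u i i

lemma star_e (n : ℕ) : star (e M n) = e M n := by
  rw [e, star_sum]
  exact Finset.sum_congr rfl fun i _ => M.star_u i i

lemma e_mul_u (n i j : ℕ) : e M n * M.u i j = if i < n then M.u i j else 0 := by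
  rw [e, Finset.sum_mul]
  rw [Finset.sum_congr rfl fun m _ => M.u_mul m m i j]
  simp [Finset.sum_ite_eq, Finset.mem_range]

lemma u_mul_e (n i j : ℕ) : M.u i j * e M n = if j < n then M.u i j else 0 := by
  rw [e, Finset.mul_sum]
  rw [Finset.sum_congr rfl fun m _ => M.u_mul i j m m]
  simp [Finset.sum_ite_eq, Finset.mem_range]

lemma e_mul_e (n : ℕ) : e M n * e M n = e M n := by
  calc e M n * e M n = ∑ i ∈ Finset.range n, e M n * M.u i i := Finset.mul_sum _ _ _
    _ = ∑ i ∈ Finset.range n, M.u i i :=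
        Finset.sum_congr rfl fun i hi => by rw [e_mul_u]; simp [Finset.mem_range.mp hi]
    _ = e M n := rfl

lemma norm_e_le (n : ℕ) : ‖e M n‖ ≤ 1 := by
  have h2 : ‖e M n‖ * ‖e M n‖ = ‖e M n‖ := by
    rw [← CStarRing.norm_star_mul_self, star_e, e_mul_e]
  nlinarith [norm_nonneg (e M n)]

lemma norm_u (i j : ℕ) : ‖M.u i j‖ = 1 := by
  have hjj : ‖M.u j j‖ = 1 := by
    have h2 : ‖M.u j j‖ * ‖M.u j j‖ = ‖M.u j j‖ := by
      rw [← CStarRing.norm_star_mul_self, M.star_u, M.u_mul]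
      simp
    have h0 : ‖M.u j j‖ ≠ 0 := norm_ne_zero_iff.mpr (M.u_ne_zero j j)
    field_simp at h2
    tauto
  have h2 : ‖M.u i j‖ * ‖M.u i j‖ = 1 := by
    rw [← CStarRing.norm_star_mul_self, M.star_u, M.u_mul]
    simpa using hjj
  nlinarith [norm_nonneg (M.u i j)]

end MU

/-! ### Tensor auxiliary -/

section Tensor

variable {K B T : Type*} [NonUnitalCStarAlgebra K] [NonUnitalCStarAlgebra B]
  [NonUnitalCStarAlgebra T] (τ : CStarTensor B K T)

lemma tmul_zero (b : B) : τ.tmul b 0 = 0 := by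
  have := τ.tmul_smul 0 b 0
  simpa using this

lemma zero_tmul (k : K) : τ.tmul 0 k = 0 := by
  have := τ.smul_tmul 0 0 k
  simpa using this

/-- `k ↦ b ⊗ k` as a CLM. -/
def tmulL (b : B) : K →L[ℂ] T :=
  LinearMap.mkContinuous
    { toFun := fun k => τ.tmul b k
      map_add' := τ.tmul_add b
      map_smul' := fun c k => τ.tmul_smul c b k } ‖b‖
    (fun k => le_of_eq (τ.norm_tmul b k))

@[simp] lemma tmulL_apply (b : B) (k : K) : tmulL τ b k = τ.tmul b k := rfl

/-- `b ↦ b ⊗ k` as a linear map. -/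
def tmulR (k : K) : B →ₗ[ℂ] T where
  toFun := fun b => τ.tmul b k
  map_add' := fun b b' => τ.add_tmul b b' k
  map_smul' := fun c b => τ.smul_tmul c b k

@[simp] lemma tmulR_apply (k : K) (b : B) : tmulR τ k b = τ.tmul b k := rfl

lemma ext_clm {f g : T →L[ℂ] T} (h : ∀ b k, f (τ.tmul b k) = g (τ.tmul b k)) : f = g := by
  apply ContinuousLinearMap.ext_on τ.dense_span
  rintro x ⟨b, k, rfl⟩
  exact h b k

variable (M : MatrixUnits K)

/-- elementary tensors against matrix units have dense span. -/
lemma dense_unit_span :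
    Dense (Submodule.span ℂ {x : T | ∃ b i j, x = τ.tmul b (M.u i j)} : Set T) := by
  set S := Submodule.span ℂ {x : T | ∃ b i j, x = τ.tmul b (M.u i j)} with hS
  have helem : ∀ (b : B) (k : K), τ.tmul b k ∈ S.topologicalClosure := by
    intro b k
    set C : Submodule ℂ K :=
      Submodule.comap ((tmulL τ b) : K →ₗ[ℂ] T) S.topologicalClosure with hC
    have hCclosed : IsClosed (C : Set K) := by
      have hset : (C : Set K) = (tmulL τ b) ⁻¹' (S.topologicalClosure : Set T) := rfl
      rw [hset]
      exact S.isClosed_topologicalClosure.preimage (tmulL τ b).continuous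
    have hsub : ((Submodule.span ℂ (Set.range fun p : ℕ × ℕ => M.u p.1 p.2) : Submodule ℂ K) :
        Set K) ⊆ (C : Set K) := by
      apply Submodule.span_le.mpr
      rintro x ⟨⟨i, j⟩, rfl⟩
      exact Submodule.le_topologicalClosure S (Submodule.subset_span ⟨b, i, j, rfl⟩)
    have huniv : (Set.univ : Set K) ⊆ (C : Set K) := by
      rw [← M.dense_span.closure_eq]
      exact closure_minimal hsub hCclosed
    exact huniv (Set.mem_univ k)
  have h1 : ((Submodule.span ℂ {x : T | ∃ b k, x = τ.tmul b k} : Submodule ℂ T) : Set T) ⊆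
      (S.topologicalClosure : Set T) := by
    apply Submodule.span_le.mpr
    rintro x ⟨b, k, rfl⟩
    exact helem b k
  have h2 : Dense (S.topologicalClosure : Set T) := τ.dense_span.mono h1
  rw [Submodule.topologicalClosure_coe] at h2
  exact h2.of_closure

end Tensor

/-! ### The multiplier `b ⊗ 1` -/

section Main

open MU

variable {K B T : Type*} [NonUnitalCStarAlgebra K] [NonUnitalCStarAlgebra B]
  [NonUnitalCStarAlgebra T] (τ : CStarTensor B K T) (M : MatrixUnits K)

/-- the approximating elements `b ⊗ e n` -/
def g (b : B) (n : ℕ) : T := τ.tmul b (e M n)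

lemma norm_g_le (b : B) (n : ℕ) : ‖g τ M b n‖ ≤ ‖b‖ := by
  rw [g, τ.norm_tmul]
  calc ‖b‖ * ‖e M n‖ ≤ ‖b‖ * 1 := by gcongr; exact norm_e_le M n
    _ = ‖b‖ := mul_one _

lemma cauchyL (b : B) (t : T) : CauchySeq fun n => g τ M b n * t := by
  have := cauchySeq_of_dense (C := ‖b‖) (fun n => lmul (g τ M b n))
    (fun n => le_trans (norm_lmul_le _) (norm_g_le τ M b n))
    (dense_unit_span τ M) ?_ t
  · exact this
  · rintro x ⟨b', i, j, rfl⟩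
    refine ⟨i + 1, fun m n hm hn => ?_⟩
    simp only [lmul_apply, g, τ.tmul_mul_tmul, e_mul_u]
    rw [if_pos (by omega), if_pos (by omega)]

lemma cauchyR (b : B) (t : T) : CauchySeq fun n => t * g τ M b n := by
  have := cauchySeq_of_dense (C := ‖b‖) (fun n => rmul (g τ M b n))
    (fun n => le_trans (norm_rmul_le _) (norm_g_le τ M b n))
    (dense_unit_span τ M) ?_ t
  · exact this
  · rintro x ⟨b', i, j, rfl⟩
    refine ⟨j + 1, fun m n hm hn => ?_⟩
    simp only [rmul_apply, τ.tmul_mul_tmul, g, u_mul_e]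
    rw [if_pos (by omega), if_pos (by omega)]

/-- `(b ⊗ 1) · t` -/
def limL (b : B) (t : T) : T := limUnder Filter.atTop fun n => g τ M b n * t

/-- `t · (b ⊗ 1)` -/
def limR (b : B) (t : T) : T := limUnder Filter.atTop fun n => t * g τ M b n

lemma tendsto_limL (b : B) (t : T) :
    Filter.Tendsto (fun n => g τ M b n * t) Filter.atTop (nhds (limL τ M b t)) :=
  (cauchyL τ M b t).tendsto_limUnder

lemma tendsto_limR (b : B) (t : T) :
    Filter.Tendsto (fun n => t * g τ M b n) Filter.atTop (nhds (limR τ M b t)) :=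
  (cauchyR τ M b t).tendsto_limUnder

lemma norm_limL_le (b : B) (t : T) : ‖limL τ M b t‖ ≤ ‖b‖ * ‖t‖ := by
  refine le_of_tendsto ((tendsto_limL τ M b t).norm) (Filter.Eventually.of_forall fun n => ?_)
  calc ‖g τ M b n * t‖ ≤ ‖g τ M b n‖ * ‖t‖ := norm_mul_le _ _
    _ ≤ ‖b‖ * ‖t‖ := by gcongr; exact norm_g_le τ M b n

lemma norm_limR_le (b : B) (t : T) : ‖limR τ M b t‖ ≤ ‖b‖ * ‖t‖ := by
  refine le_of_tendsto ((tendsto_limR τ M b t).norm) (Filter.Eventually.of_forall fun n => ?_)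
  calc ‖t * g τ M b n‖ ≤ ‖t‖ * ‖g τ M b n‖ := norm_mul_le _ _
    _ ≤ ‖t‖ * ‖b‖ := by gcongr; exact norm_g_le τ M b n
    _ = ‖b‖ * ‖t‖ := mul_comm _ _

/-- left multiplication by `b ⊗ 1` as a CLM -/
def Lop (b : B) : T →L[ℂ] T :=
  LinearMap.mkContinuous
    { toFun := limL τ M b
      map_add' := fun t t' => by
        refine tendsto_nhds_unique (tendsto_limL τ M b (t + t')) ?_
        have := (tendsto_limL τ M b t).add (tendsto_limL τ M b t')
        refine this.congr fun n => ?_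
        rw [mul_add]
      map_smul' := fun c t => by
        refine tendsto_nhds_unique (tendsto_limL τ M b (c • t)) ?_
        have := (tendsto_limL τ M b t).const_smul c
        refine this.congr fun n => ?_
        rw [mul_smul_comm] } ‖b‖
    (norm_limL_le τ M b)

/-- right multiplication by `b ⊗ 1` as a CLM -/
def Rop (b : B) : T →L[ℂ] T :=
  LinearMap.mkContinuous
    { toFun := limR τ M b
      map_add' := fun t t' => by
        refine tendsto_nhds_unique (tendsto_limR τ M b (t + t')) ?_
        have := (tendsto_limR τ M b t).add (tendsto_limR τ M b t')
        refine this.congr fun n => ?_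
        rw [add_mul]
      map_smul' := fun c t => by
        refine tendsto_nhds_unique (tendsto_limR τ M b (c • t)) ?_
        have := (tendsto_limR τ M b t).const_smul c
        refine this.congr fun n => ?_
        rw [smul_mul_assoc] } ‖b‖
    (norm_limR_le τ M b)

@[simp] lemma Lop_apply (b : B) (t : T) : Lop τ M b t = limL τ M b t := rfl
@[simp] lemma Rop_apply (b : B) (t : T) : Rop τ M b t = limR τ M b t := rfl

lemma Lop_tmul (b b' : B) (k : K) : Lop τ M b (τ.tmul b' k) = τ.tmul (b * b') k := by
  have hfun : (Lop τ M b).comp (tmulL τ b') = tmulL τ (b * b') := by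
    apply ContinuousLinearMap.ext_on M.dense_span
    rintro x ⟨⟨i, j⟩, rfl⟩
    simp only [ContinuousLinearMap.comp_apply, tmulL_apply, Lop_apply]
    refine tendsto_nhds_unique (tendsto_limL τ M b _) ?_
    refine Filter.Tendsto.congr' ?_ tendsto_const_nhds
    filter_upwards [Filter.eventually_ge_atTop (i + 1)] with n hn
    simp only [g, τ.tmul_mul_tmul, e_mul_u]
    rw [if_pos (by omega)]
  have := congrArg (fun f => f k) hfun
  simpa using this

lemma Rop_tmul (b b' : B) (k : K) : Rop τ M b (τ.tmul b' k) = τ.tmul (b' * b) k := by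
  have hfun : (Rop τ M b).comp (tmulL τ b') = tmulL τ (b' * b) := by
    apply ContinuousLinearMap.ext_on M.dense_span
    rintro x ⟨⟨i, j⟩, rfl⟩
    simp only [ContinuousLinearMap.comp_apply, tmulL_apply, Rop_apply]
    refine tendsto_nhds_unique (tendsto_limR τ M b _) ?_
    refine Filter.Tendsto.congr' ?_ tendsto_const_nhds
    filter_upwards [Filter.eventually_ge_atTop (j + 1)] with n hn
    simp only [g, τ.tmul_mul_tmul, u_mul_e]
    rw [if_pos (by omega)]
  have := congrArg (fun f => f k) hfun
  simpa using this

lemma Lop_mul (b : B) (t y : T) : Lop τ M b (t * y) = Lop τ M b t * y := by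
  simp only [Lop_apply]
  refine tendsto_nhds_unique (tendsto_limL τ M b (t * y)) ?_
  have := (tendsto_limL τ M b t).mul_const y
  refine this.congr fun n => ?_
  rw [mul_assoc]

lemma Rop_mul (b : B) (t y : T) : Rop τ M b (y * t) = y * Rop τ M b t := by
  simp only [Rop_apply]
  refine tendsto_nhds_unique (tendsto_limR τ M b (y * t)) ?_
  have := (tendsto_limR τ M b t).const_mul y
  refine this.congr fun n => ?_
  rw [mul_assoc]

lemma central' (b : B) (x y : T) : Rop τ M b x * y = x * Lop τ M b y := by
  refine tendsto_nhds_unique ((tendsto_limR τ M b x).mul_const y) ?_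
  have := (tendsto_limL τ M b y).const_mul x
  refine this.congr fun n => ?_
  rw [mul_assoc]

/-- the multiplier `b ⊗ 1` -/
def mult (b : B) : 𝓜(ℂ, T) := ⟨(Lop τ M b, Rop τ M b), central' τ M b⟩

@[simp] lemma mult_fst (b : B) : (mult τ M b).fst = Lop τ M b := rfl
@[simp] lemma mult_snd (b : B) : (mult τ M b).snd = Rop τ M b := rfl

lemma Lop_star (b : B) (t : T) : Lop τ M (star b) t = star (Rop τ M b (star t)) := by
  simp only [Lop_apply, Rop_apply]
  refine tendsto_nhds_unique (tendsto_limL τ M (star b) t) ?_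
  have := (tendsto_limR τ M b (star t)).star
  refine this.congr fun n => ?_
  rw [star_mul, star_star, g, g, τ.star_tmul, star_e]

lemma Rop_star (b : B) (t : T) : Rop τ M (star b) t = star (Lop τ M b (star t)) := by
  simp only [Lop_apply, Rop_apply]
  refine tendsto_nhds_unique (tendsto_limR τ M (star b) t) ?_
  have := (tendsto_limL τ M b (star t)).star
  refine this.congr fun n => ?_
  rw [star_mul, star_star, g, g, τ.star_tmul, star_e]

/-- `b ↦ b ⊗ 1` as a star algebra homomorphism into the multiplier algebra. -/
def psi : B →⋆ₙₐ[ℂ] 𝓜(ℂ, T) where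
  toFun := mult τ M
  map_add' b b' := by
    ext : 1
    refine Prod.ext (ContinuousLinearMap.ext fun t => ?_) (ContinuousLinearMap.ext fun t => ?_)
    · show Lop τ M (b + b') t = Lop τ M b t + Lop τ M b' t
      refine tendsto_nhds_unique (tendsto_limL τ M (b + b') t) ?_
      refine ((tendsto_limL τ M b t).add (tendsto_limL τ M b' t)).congr fun n => ?_
      rw [g, g, g, τ.add_tmul, add_mul]
    · show Rop τ M (b + b') t = Rop τ M b t + Rop τ M b' t
      refine tendsto_nhds_unique (tendsto_limR τ M (b + b') t) ?_
      refine ((tendsto_limR τ M b t).add (tendsto_limR τ M b' t)).congr fun n => ?_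
      rw [g, g, g, τ.add_tmul, mul_add]
  map_smul' c b := by
    ext : 1
    refine Prod.ext (ContinuousLinearMap.ext fun t => ?_) (ContinuousLinearMap.ext fun t => ?_)
    · show Lop τ M (c • b) t = c • Lop τ M b t
      refine tendsto_nhds_unique (tendsto_limL τ M (c • b) t) ?_
      refine ((tendsto_limL τ M b t).const_smul c).congr fun n => ?_
      rw [g, g, τ.smul_tmul, smul_mul_assoc]
    · show Rop τ M (c • b) t = c • Rop τ M b t
      refine tendsto_nhds_unique (tendsto_limR τ M (c • b) t) ?_
      refine ((tendsto_limR τ M b t).const_smul c).congr fun n => ?_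
      rw [g, g, τ.smul_tmul, mul_smul_comm]
  map_zero' := by
    ext : 1
    refine Prod.ext (ContinuousLinearMap.ext fun t => ?_) (ContinuousLinearMap.ext fun t => ?_)
    · show Lop τ M 0 t = 0
      refine tendsto_nhds_unique (tendsto_limL τ M 0 t) ?_
      refine Filter.Tendsto.congr (fun n => ?_) tendsto_const_nhds
      rw [g, zero_tmul, zero_mul]
    · show Rop τ M 0 t = 0
      refine tendsto_nhds_unique (tendsto_limR τ M 0 t) ?_
      refine Filter.Tendsto.congr (fun n => ?_) tendsto_const_nhds
      rw [g, zero_tmul, mul_zero]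
  map_mul' b b' := by
    ext : 1
    refine Prod.ext ?_ ?_
    · rw [DoubleCentralizer.mul_fst]
      apply ext_clm τ
      intro b'' k
      show Lop τ M (b * b') (τ.tmul b'' k) = Lop τ M b (Lop τ M b' (τ.tmul b'' k))
      rw [Lop_tmul, Lop_tmul, Lop_tmul, mul_assoc]
    · rw [DoubleCentralizer.mul_snd]
      apply ext_clm τ
      intro b'' k
      show Rop τ M (b * b') (τ.tmul b'' k) = Rop τ M b' (Rop τ M b (τ.tmul b'' k))
      rw [Rop_tmul, Rop_tmul, Rop_tmul, mul_assoc]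
  map_star' b := by
    ext : 1
    refine Prod.ext (ContinuousLinearMap.ext fun t => ?_) (ContinuousLinearMap.ext fun t => ?_)
    · show Lop τ M (star b) t = (star (mult τ M b)).fst t
      rw [DoubleCentralizer.star_fst, mult_snd, Lop_star]
    · show Rop τ M (star b) t = (star (mult τ M b)).snd t
      rw [DoubleCentralizer.star_snd, mult_fst, Rop_star]

end Main

/-! ### Interaction with `ι = 1 ⊗ id` -/

section Iota

open MU

variable {K B T : Type*} [NonUnitalCStarAlgebra K] [NonUnitalCStarAlgebra B]
  [NonUnitalCStarAlgebra T] (τ : CStarTensor B K T) (M : MatrixUnits K)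
  (ι : K →⋆ₙₐ[ℂ] 𝓜(ℂ, T)) (hι₁ : IsOneTensorId τ ι)

include hι₁

lemma iota_fst (k : K) (b' : B) (k' : K) :
    (ι k).fst (τ.tmul b' k') = τ.tmul b' (k * k') :=
  coe_inj (by rw [← mul_coe]; exact (hι₁ k b' k').1)

lemma iota_snd (k : K) (b' : B) (k' : K) :
    (ι k).snd (τ.tmul b' k') = τ.tmul b' (k' * k) :=
  coe_inj (by rw [← coe_mul]; exact (hι₁ k b' k').2)

lemma mult_mul_iota (b : B) (k : K) :
    mult τ M b * ι k = ((τ.tmul b k : T) : 𝓜(ℂ, T)) := by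
  have hf : (mult τ M b * ι k).fst = ((τ.tmul b k : T) : 𝓜(ℂ, T)).fst := by
    rw [DoubleCentralizer.mul_fst, mult_fst, DoubleCentralizer.coe_fst]
    apply ext_clm τ
    intro b' k'
    show Lop τ M b ((ι k).fst (τ.tmul b' k')) = τ.tmul b k * τ.tmul b' k'
    rw [iota_fst τ ι hι₁, Lop_tmul, τ.tmul_mul_tmul]
  exact ext_fst _ _ fun t => by rw [hf]

lemma iota_mul_mult (b : B) (k : K) :
    ι k * mult τ M b = ((τ.tmul b k : T) : 𝓜(ℂ, T)) := by
  have hf : (ι k * mult τ M b).fst = ((τ.tmul b k : T) : 𝓜(ℂ, T)).fst := by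
    rw [DoubleCentralizer.mul_fst, mult_fst, DoubleCentralizer.coe_fst]
    apply ext_clm τ
    intro b' k'
    show (ι k).fst (Lop τ M b (τ.tmul b' k')) = τ.tmul b k * τ.tmul b' k'
    rw [Lop_tmul, iota_fst τ ι hι₁, τ.tmul_mul_tmul]
  exact ext_fst _ _ fun t => by rw [hf]

/-- surjectivity onto the relative commutant -/
lemma exists_mult_eq (m : 𝓜(ℂ, T)) (hm : m ∈ relComm ι) : ∃ b : B, mult τ M b = m := by
  set p := M.u 0 0 with hp
  have hpp : p * p = p := by rw [hp, M.u_mul]; simp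
  obtain ⟨t, ht⟩ := (hm p).2
  have hcomm := (hm p).1
  have hsnd : (ι p).snd t = t := by
    apply coe_inj
    rw [← coe_mul, ht, mul_assoc, ← map_mul, hpp]
  have hfst : (ι p).fst t = t := by
    apply coe_inj
    rw [← mul_coe, ht, ← mul_assoc, hcomm, mul_assoc, ← map_mul, hpp]
  -- the corner `p K p` is scalar
  have hscal : ∀ k : K, p * k * p ∈ (Submodule.span ℂ {p} : Submodule ℂ K) := by
    set φ : K →L[ℂ] K := (lmul p).comp (rmul p) with hφ
    have hφapp : ∀ k, φ k = p * k * p := fun k => by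
      simp only [hφ, ContinuousLinearMap.comp_apply, lmul_apply, rmul_apply, mul_assoc]
    set C : Submodule ℂ K := Submodule.comap (φ : K →ₗ[ℂ] K) (Submodule.span ℂ {p}) with hC
    have hCclosed : IsClosed (C : Set K) := by
      have hset : (C : Set K) = φ ⁻¹' ((Submodule.span ℂ {p} : Submodule ℂ K) : Set K) := rfl
      rw [hset]
      exact (Submodule.closed_of_finiteDimensional _).preimage φ.continuous
    have hsub : ((Submodule.span ℂ (Set.range fun q : ℕ × ℕ => M.u q.1 q.2) :
        Submodule ℂ K) : Set K) ⊆ (C : Set K) := by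
      apply Submodule.span_le.mpr
      rintro x ⟨⟨i, j⟩, rfl⟩
      show φ (M.u i j) ∈ Submodule.span ℂ {p}
      rw [hφapp, hp, M.u_mul]
      by_cases hi : (0 : ℕ) = i
      · rw [if_pos hi, M.u_mul]
        by_cases hj : j = 0
        · rw [if_pos hj]
          exact Submodule.mem_span_singleton_self _
        · rw [if_neg hj]
          exact Submodule.zero_mem _
      · rw [if_neg hi, zero_mul]
        exact Submodule.zero_mem _
    intro k
    have huniv : (Set.univ : Set K) ⊆ (C : Set K) := by
      rw [← M.dense_span.closure_eq]
      exact closure_minimal hsub hCclosed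
    have hk : k ∈ C := huniv (Set.mem_univ k)
    rw [← hφapp]
    exact hk
  -- the corner of `T` is `B ⊗ p`
  have hQ : ∀ s : T, (ι p).fst ((ι p).snd s) ∈ Set.range fun b : B => τ.tmul b p := by
    set Q : T →L[ℂ] T := (ι p).fst.comp (ι p).snd with hQdef
    have hQapp : ∀ s, Q s = (ι p).fst ((ι p).snd s) := fun s => rfl
    set RB : Submodule ℂ T := LinearMap.range (tmulR τ p) with hRB
    have hRBset : (RB : Set T) = Set.range fun b : B => τ.tmul b p := by
      ext x
      simp [hRB, LinearMap.mem_range]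
    have hRBclosed : IsClosed (RB : Set T) := by
      rw [hRBset]
      have hiso : Isometry fun b : B => τ.tmul b p := by
        apply AddMonoidHomClass.isometry_of_norm (tmulR τ p)
        intro b
        rw [tmulR_apply, τ.norm_tmul, hp, norm_u, mul_one]
      exact hiso.isClosedEmbedding.isClosed_range
    set C : Submodule ℂ T := Submodule.comap (Q : T →ₗ[ℂ] T) RB with hC
    have hCclosed : IsClosed (C : Set T) := by
      have hset : (C : Set T) = Q ⁻¹' (RB : Set T) := rfl
      rw [hset]
      exact hRBclosed.preimage Q.continuous
    have hsub : ((Submodule.span ℂ {x : T | ∃ b k, x = τ.tmul b k} : Submodule ℂ T) :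
        Set T) ⊆ (C : Set T) := by
      apply Submodule.span_le.mpr
      rintro x ⟨b', k', rfl⟩
      show Q (τ.tmul b' k') ∈ RB
      rw [hQapp, iota_snd τ ι hι₁, iota_fst τ ι hι₁]
      obtain ⟨c, hc⟩ := Submodule.mem_span_singleton.mp (hscal k')
      have hval : τ.tmul b' (p * (k' * p)) = τ.tmul (c • b') p := by
        rw [← mul_assoc, ← hc, τ.tmul_smul, ← τ.smul_tmul]
      rw [hval]
      exact ⟨c • b', rfl⟩
    intro s
    have huniv : (Set.univ : Set T) ⊆ (C : Set T) := by
      rw [← τ.dense_span.closure_eq]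
      exact closure_minimal hsub hCclosed
    have hs : s ∈ C := huniv (Set.mem_univ s)
    have hs2 : Q s ∈ RB := Submodule.mem_comap.mp hs
    rw [← hRBset]
    exact hs2
  have hcorner := hQ t
  rw [hsnd, hfst] at hcorner
  obtain ⟨b, hb0⟩ := hcorner
  have hb : τ.tmul b p = t := hb0
  refine ⟨b, ?_⟩
  have step : ∀ i j : ℕ, m * ι (M.u i j) = ((τ.tmul b (M.u i j) : T) : 𝓜(ℂ, T)) := by
    intro i j
    have h1 : M.u i j = M.u i 0 * p * M.u 0 j := by
      rw [hp, M.u_mul]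
      simp [M.u_mul]
    calc m * ι (M.u i j) = m * (ι (M.u i 0) * ι p * ι (M.u 0 j)) := by
          rw [← map_mul, ← map_mul, ← h1]
      _ = (m * ι (M.u i 0)) * ι p * ι (M.u 0 j) := by rw [← mul_assoc, ← mul_assoc]
      _ = ι (M.u i 0) * (m * ι p) * ι (M.u 0 j) := by
          rw [← (hm (M.u i 0)).1, mul_assoc (ι (M.u i 0))]
      _ = ι (M.u i 0) * ((τ.tmul b p : T) : 𝓜(ℂ, T)) * ι (M.u 0 j) := by rw [← ht, hb]
      _ = ((τ.tmul b (M.u i 0 * p) : T) : 𝓜(ℂ, T)) * ι (M.u 0 j) := by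
          rw [(hι₁ (M.u i 0) b p).1]
      _ = ((τ.tmul b (M.u i 0 * p * M.u 0 j) : T) : 𝓜(ℂ, T)) := by
          rw [(hι₁ (M.u 0 j) b (M.u i 0 * p)).2]
      _ = ((τ.tmul b (M.u i j) : T) : 𝓜(ℂ, T)) := by rw [← h1]
  apply ext_fst
  suffices hfst2 : (mult τ M b).fst = m.fst by intro t; rw [hfst2]
  apply ContinuousLinearMap.ext_on (dense_unit_span τ M)
  rintro x ⟨b', i, j, rfl⟩
  show Lop τ M b (τ.tmul b' (M.u i j)) = m.fst (τ.tmul b' (M.u i j))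
  have e1 : τ.tmul b' (M.u i j) = (ι (M.u i j)).fst (τ.tmul b' (M.u j j)) := by
    rw [iota_fst τ ι hι₁, M.u_mul]
    simp
  rw [Lop_tmul, e1]
  have e2 : m.fst ((ι (M.u i j)).fst (τ.tmul b' (M.u j j))) =
      (m * ι (M.u i j)).fst (τ.tmul b' (M.u j j)) := by
    rw [DoubleCentralizer.mul_fst]; rfl
  rw [e2, step i j, DoubleCentralizer.coe_fst]
  show τ.tmul (b * b') (M.u i j) = τ.tmul b (M.u i j) * τ.tmul b' (M.u j j)
  rw [τ.tmul_mul_tmul, M.u_mul]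
  simp

end Iota

end RelCommAux

open RelCommAux

/-- For any C⋆-algebra `B`, regard the spatial tensor product `T = B ⊗ 𝒦`
as a `𝒦`-algebra via `1 ⊗ id : k ↦ 1_B ⊗ k`.  Then `b ↦ b ⊗ 1_𝒦` is a C⋆-isomorphism of
`B` onto the relative commutant `C(B ⊗ 𝒦, 1 ⊗ id)`; in particular
`C(B ⊗ 𝒦, 1 ⊗ id) = B ⊗ 1_𝒦` inside `M(B ⊗ 𝒦)`.  Here the multiplier `b ⊗ 1_𝒦` is
characterized by `(b ⊗ 1)·(b' ⊗ k) = (b·b') ⊗ k` and `(b' ⊗ k)·(b ⊗ 1) = (b'·b) ⊗ k`. -/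
theorem relComm_oneTensorId_eq_tensor_one
    {K B T : Type*} [NonUnitalCStarAlgebra K] [NonUnitalCStarAlgebra B]
    [NonUnitalCStarAlgebra T]
    (hK : IsCompactOperatorsAlgebra K)
    (τ : CStarTensor B K T)
    (ι : K →⋆ₙₐ[ℂ] 𝓜(ℂ, T)) (hι₁ : IsOneTensorId τ ι) (hι₂ : Nondegenerate ι) :
    ∃ ψ : B →⋆ₙₐ[ℂ] 𝓜(ℂ, T), Function.Injective ψ ∧ Set.range ψ = relComm ι ∧
      ∀ (b b' : B) (k : K),
        ψ b * (τ.tmul b' k : 𝓜(ℂ, T)) = (τ.tmul (b * b') k : 𝓜(ℂ, T)) ∧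
          (τ.tmul b' k : 𝓜(ℂ, T)) * ψ b = (τ.tmul (b' * b) k : 𝓜(ℂ, T)) := by
  obtain ⟨M⟩ := hK
  refine ⟨psi τ M, ?_, ?_, ?_⟩
  · intro b₁ b₂ h
    have h0 : mult τ M (b₁ - b₂) = 0 := by
      have hsub : psi τ M (b₁ - b₂) = psi τ M b₁ - psi τ M b₂ := map_sub _ _ _
      have : mult τ M (b₁ - b₂) = psi τ M b₁ - psi τ M b₂ := hsub
      rw [this, h, sub_self]
    set d := b₁ - b₂ with hd
    have h1 : τ.tmul (d * star d) (M.u 0 0) = 0 := by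
      have h1' := congrArg (fun mm : 𝓜(ℂ, T) => mm.fst (τ.tmul (star d) (M.u 0 0))) h0
      have h1l : (mult τ M d).fst (τ.tmul (star d) (M.u 0 0)) =
          τ.tmul (d * star d) (M.u 0 0) := Lop_tmul τ M d (star d) (M.u 0 0)
      have h1r : (0 : 𝓜(ℂ, T)).fst (τ.tmul (star d) (M.u 0 0)) = 0 := by
        rw [DoubleCentralizer.zero_fst]; rfl
      rw [← h1l, ← h1r]
      exact h1'
    have h2 : ‖d * star d‖ = 0 := by
      have := congrArg norm h1
      rwa [τ.norm_tmul, MU.norm_u, mul_one, norm_zero] at this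
    have h3 : ‖d‖ * ‖d‖ = 0 := by rw [← CStarRing.norm_self_mul_star]; exact h2
    have h4 : d = 0 := by
      rw [← norm_eq_zero]
      nlinarith [norm_nonneg d]
    exact sub_eq_zero.mp h4
  · apply Set.Subset.antisymm
    · rintro x ⟨b, rfl⟩
      intro k
      refine ⟨?_, τ.tmul b k, (mult_mul_iota τ M ι hι₁ b k).symm⟩
      show ι k * mult τ M b = mult τ M b * ι k
      rw [iota_mul_mult τ M ι hι₁, mult_mul_iota τ M ι hι₁]
    · intro m hm
      exact RelCommAux.exists_mult_eq τ M ι hι₁ m hm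
  · intro b b' k
    constructor
    · show mult τ M b * _ = _
      rw [mul_coe]
      exact congrArg _ (Lop_tmul τ M b b' k)
    · show _ * mult τ M b = _
      rw [coe_mul]
      exact congrArg _ (Rop_tmul τ M b b' k)
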